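/- arXiv:2005.13608 — 4 statements merged into one kernel-verified Lean document; each statement's English description precedes it below -/
import Mathlib

section
/- For any graphs G and H without isolated vertices, γ_tR(G × H) ≥ max{ρ(G)·γ_tR(H), ρ(H)·γ_tR(G)}, where ρ denotes the packing number. -/
open Finset

/-- A total Roman dominating function: labels in {0,1,2}, every 0-labeled vertex has a
2-labeled neighbor, and positive-labeled vertices induce a subgraph with no isolated vertex. -/
def IsTRDF {V : Type*} (G : SimpleGraph V) (f : V → ℕ) : Prop :=
  (∀ v, f v ≤ 2) ∧
  (∀ v, f v = 0 → ∃ u, G.Adj v u ∧ f u = 2) ∧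
  (∀ v, 0 < f v → ∃ u, G.Adj v u ∧ 0 < f u)

/-- The total Roman domination number. -/
noncomputable def trdn {V : Type*} (G : SimpleGraph V) [Fintype V] : ℕ :=
  sInf {w | ∃ f : V → ℕ, IsTRDF G f ∧ ∑ v, f v = w}

/-- A total dominating set. -/
def IsTotalDomSet {V : Type*} (G : SimpleGraph V) (D : Set V) : Prop :=
  ∀ v, ∃ u ∈ D, G.Adj v u

/-- The total domination number. -/
noncomputable def tdn {V : Type*} (G : SimpleGraph V) [Fintype V] : ℕ :=
  sInf {n | ∃ D : Finset V, IsTotalDomSet G ↑D ∧ D.card = n}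

/-- A packing: pairwise disjoint closed neighborhoods. -/
def IsPacking {V : Type*} (G : SimpleGraph V) (S : Set V) : Prop :=
  ∀ u ∈ S, ∀ v ∈ S, u ≠ v →
    Disjoint (insert u (G.neighborSet u)) (insert v (G.neighborSet v))

/-- The packing number. -/
noncomputable def packingNumber {V : Type*} (G : SimpleGraph V) [Fintype V] : ℕ :=
  sSup {n | ∃ S : Finset V, IsPacking G ↑S ∧ S.card = n}

/-- An open packing: pairwise disjoint open neighborhoods. -/
def IsOpenPacking {V : Type*} (G : SimpleGraph V) (S : Set V) : Prop :=
  ∀ u ∈ S, ∀ v ∈ S, u ≠ v → Disjoint (G.neighborSet u) (G.neighborSet v)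

/-- The open packing number. -/
noncomputable def openPackingNumber {V : Type*} (G : SimpleGraph V) [Fintype V] : ℕ :=
  sSup {n | ∃ S : Finset V, IsOpenPacking G ↑S ∧ S.card = n}

/-- The direct (tensor) product of two simple graphs. -/
def dirProd {V W : Type*} (G : SimpleGraph V) (H : SimpleGraph W) : SimpleGraph (V × W) where
  Adj p q := G.Adj p.1 q.1 ∧ H.Adj p.2 q.2
  symm := ⟨fun p q h => ⟨h.1.symm, h.2.symm⟩⟩
  loopless := ⟨fun p h => G.irrefl h.1⟩

/-- A graph with no isolated vertices. -/
def NoIsolated {V : Type*} (G : SimpleGraph V) : Prop := ∀ v, ∃ u, G.Adj v u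

lemma key {V W : Type*} [Fintype V] [Fintype W] (G : SimpleGraph V) (H : SimpleGraph W)
    (f : V × W → ℕ) (hf : IsTRDF (dirProd G H) f)
    (S : Finset V) (hS : IsPacking G ↑S) :
    S.card * trdn H ≤ ∑ p, f p := by
  classical
  set N : V → Finset V := fun v => (insert v (G.neighborSet v)).toFinset with hN
  have hmemN : ∀ v u, u ∈ N v ↔ u = v ∨ G.Adj v u := by
    intro v u; simp [hN, Set.mem_toFinset]
  have hTRDF : ∀ v : V, IsTRDF H (fun h => min 2 (∑ u ∈ N v, f (u, h))) := by
    intro v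
    refine ⟨fun h => min_le_left _ _, ?_, ?_⟩
    · intro h h0
      have hs : ∑ u ∈ N v, f (u, h) = 0 := by
        rcases Nat.min_eq_zero_iff.mp h0 with h2 | h2
        · omega
        · exact h2
      have hvh : f (v, h) = 0 := by
        have := (Finset.sum_eq_zero_iff.mp hs) v ((hmemN v v).mpr (Or.inl rfl))
        exact this
      obtain ⟨q, hq, hq2⟩ := hf.2.1 (v, h) hvh
      refine ⟨q.2, hq.2, ?_⟩
      have hqmem : q.1 ∈ N v := (hmemN v q.1).mpr (Or.inr hq.1)
      have h2 : 2 ≤ ∑ u ∈ N v, f (u, q.2) := by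
        calc 2 = f (q.1, q.2) := hq2.symm
        _ ≤ _ := Finset.single_le_sum (f := fun u => f (u, q.2)) (fun i _ => Nat.zero_le _) hqmem
      exact min_eq_left h2
    · intro h hpos
      have hs : 0 < ∑ u ∈ N v, f (u, h) := lt_of_lt_of_le hpos (min_le_right _ _)
      by_cases hvh : f (v, h) = 0
      · obtain ⟨q, hq, hq2⟩ := hf.2.1 (v, h) hvh
        refine ⟨q.2, hq.2, ?_⟩
        have hqmem : q.1 ∈ N v := (hmemN v q.1).mpr (Or.inr hq.1)
        have h2 : 2 ≤ ∑ u ∈ N v, f (u, q.2) := by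
          calc 2 = f (q.1, q.2) := hq2.symm
          _ ≤ _ := Finset.single_le_sum (f := fun u => f (u, q.2)) (fun i _ => Nat.zero_le _) hqmem
        exact lt_min (by norm_num) (by omega)
      · obtain ⟨q, hq, hq2⟩ := hf.2.2 (v, h) (Nat.pos_of_ne_zero hvh)
        refine ⟨q.2, hq.2, ?_⟩
        have hqmem : q.1 ∈ N v := (hmemN v q.1).mpr (Or.inr hq.1)
        have h2 : f (q.1, q.2) ≤ ∑ u ∈ N v, f (u, q.2) :=
          Finset.single_le_sum (f := fun u => f (u, q.2)) (fun i _ => Nat.zero_le _) hqmem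
        exact lt_min (by norm_num) (lt_of_lt_of_le hq2 h2)
  have step1 : ∀ v : V, trdn H ≤ ∑ h, min 2 (∑ u ∈ N v, f (u, h)) := by
    intro v
    exact Nat.sInf_le ⟨_, hTRDF v, rfl⟩
  have hdisj : (S : Set V).PairwiseDisjoint N := by
    intro u hu v hv huv
    have := hS u hu v hv huv
    simp only [Function.onFun, hN]
    rw [← Finset.disjoint_coe]
    simpa [Set.coe_toFinset] using this
  calc S.card * trdn H = ∑ _v ∈ S, trdn H := by rw [Finset.sum_const, smul_eq_mul]
    _ ≤ ∑ v ∈ S, ∑ h, min 2 (∑ u ∈ N v, f (u, h)) := Finset.sum_le_sum fun v _ => step1 v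
    _ ≤ ∑ v ∈ S, ∑ h, ∑ u ∈ N v, f (u, h) :=
        Finset.sum_le_sum fun v _ => Finset.sum_le_sum fun h _ => min_le_right _ _
    _ = ∑ v ∈ S, ∑ u ∈ N v, ∑ h, f (u, h) := by
        refine Finset.sum_congr rfl fun v _ => Finset.sum_comm
    _ = ∑ u ∈ S.biUnion N, ∑ h, f (u, h) := (Finset.sum_biUnion hdisj).symm
    _ ≤ ∑ u, ∑ h, f (u, h) :=
        Finset.sum_le_sum_of_subset (Finset.subset_univ _)
    _ = ∑ p, f p := by rw [← Fintype.sum_prod_type]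

theorem stmt_7 {V W : Type*} [Fintype V] [Fintype W]
    (G : SimpleGraph V) (H : SimpleGraph W)
    (hG : NoIsolated G) (hH : NoIsolated H) :
    trdn (dirProd G H) ≥ max (packingNumber G * trdn H) (packingNumber H * trdn G) := by
  classical
  -- the constant-2 function is a TRDF of the product
  have hne : {w | ∃ f : V × W → ℕ, IsTRDF (dirProd G H) f ∧ ∑ p, f p = w}.Nonempty := by
    refine ⟨_, fun _ => 2, ⟨fun _ => le_refl 2, fun v h => by simp at h, ?_⟩, rfl⟩
    intro p _
    obtain ⟨g', hg'⟩ := hG p.1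
    obtain ⟨h', hh'⟩ := hH p.2
    exact ⟨(g', h'), ⟨hg', hh'⟩, by norm_num⟩
  obtain ⟨f, hf, hsum⟩ := Nat.sInf_mem hne
  -- extract an optimal packing of G
  have hpackG : ∃ S : Finset V, IsPacking G ↑S ∧ S.card = packingNumber G := by
    have hne' : {n | ∃ S : Finset V, IsPacking G ↑S ∧ S.card = n}.Nonempty :=
      ⟨0, ∅, by intro u hu; simp at hu, by simp⟩
    have hbd : BddAbove {n | ∃ S : Finset V, IsPacking G ↑S ∧ S.card = n} := by
      refine ⟨Fintype.card V, fun n hn => ?_⟩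
      obtain ⟨S, _, hcard⟩ := hn
      exact hcard ▸ Finset.card_le_univ S
    exact Nat.sSup_mem hne' hbd
  have hpackH : ∃ S : Finset W, IsPacking H ↑S ∧ S.card = packingNumber H := by
    have hne' : {n | ∃ S : Finset W, IsPacking H ↑S ∧ S.card = n}.Nonempty :=
      ⟨0, ∅, by intro u hu; simp at hu, by simp⟩
    have hbd : BddAbove {n | ∃ S : Finset W, IsPacking H ↑S ∧ S.card = n} := by
      refine ⟨Fintype.card W, fun n hn => ?_⟩
      obtain ⟨S, _, hcard⟩ := hn
      exact hcard ▸ Finset.card_le_univ S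
    exact Nat.sSup_mem hne' hbd
  obtain ⟨S, hS, hScard⟩ := hpackG
  obtain ⟨T, hT, hTcard⟩ := hpackH
  rw [ge_iff_le, max_le_iff]
  constructor
  · have hk := key G H f hf S hS
    rw [hScard] at hk
    exact le_of_le_of_eq hk hsum
  · -- swap coordinates
    have hf' : IsTRDF (dirProd H G) (fun p => f (p.2, p.1)) := by
      obtain ⟨h1, h2, h3⟩ := hf
      refine ⟨fun p => h1 _, ?_, ?_⟩
      · intro p hp
        obtain ⟨q, hq, hq2⟩ := h2 (p.2, p.1) hp
        exact ⟨(q.2, q.1), ⟨hq.2, hq.1⟩, hq2⟩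
      · intro p hp
        obtain ⟨q, hq, hq2⟩ := h3 (p.2, p.1) hp
        exact ⟨(q.2, q.1), ⟨hq.2, hq.1⟩, hq2⟩
    have hsum' : ∑ p : W × V, f (p.2, p.1) = ∑ p, f p :=
      Fintype.sum_equiv (Equiv.prodComm W V) _ _ (fun p => rfl)
    have hk := key H G (fun p => f (p.2, p.1)) hf' T hT
    rw [hTcard, hsum'] at hk
    exact le_of_le_of_eq hk hsum
end

section
/- For graphs G and H without isolated vertices, γ_tR(G × H) = 4 if and only if both G and H are isomorphic to K_2. -/
open Finset

lemma fin2_eq {i j k : Fin 2} (h1 : i ≠ k) (h2 : j ≠ k) : i = j := by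
  revert i j k; decide

lemma eq_of_two {V : Type*} (e : V ≃ Fin 2) {x y a : V}
    (h1 : x ≠ a) (h2 : y ≠ a) : x = y :=
  e.injective (fin2_eq (fun h => h1 (e.injective h)) (fun h => h2 (e.injective h)))

lemma sum_three_le {α : Type*} [Fintype α] (f : α → ℕ) {x u z : α}
    (hxu : x ≠ u) (hxz : x ≠ z) (huz : u ≠ z) :
    f x + f u + f z ≤ ∑ v, f v := by
  classical
  have h : f x + f u + f z = ∑ v ∈ ({x, u, z} : Finset α), f v := by
    rw [Finset.sum_insert (by simp [hxu, hxz]), Finset.sum_insert (by simp [huz]),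
      Finset.sum_singleton]
    ring
  rw [h]
  exact Finset.sum_le_sum_of_subset (Finset.subset_univ _)

lemma sum_four_le {α : Type*} [Fintype α] (f : α → ℕ) {x u p q : α}
    (hxu : x ≠ u) (hxp : x ≠ p) (hxq : x ≠ q) (hup : u ≠ p) (huq : u ≠ q) (hpq : p ≠ q) :
    f x + f u + f p + f q ≤ ∑ v, f v := by
  classical
  have h : f x + f u + f p + f q = ∑ v ∈ ({x, u, p, q} : Finset α), f v := by
    rw [Finset.sum_insert (by simp [hxu, hxp, hxq]), Finset.sum_insert (by simp [hup, huq]),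
      Finset.sum_insert (by simp [hpq]), Finset.sum_singleton]
    ring
  rw [h]
  exact Finset.sum_le_sum_of_subset (Finset.subset_univ _)

lemma iso_of_card_two {V : Type*} [Fintype V] (G : SimpleGraph V) (hG : NoIsolated G)
    (h2 : Fintype.card V = 2) : Nonempty (G ≃g (⊤ : SimpleGraph (Fin 2))) := by
  have e : V ≃ Fin 2 := Fintype.equivFinOfCardEq h2
  refine ⟨⟨e, ?_⟩⟩
  intro a b
  simp only [SimpleGraph.top_adj, ne_eq, EmbeddingLike.apply_eq_iff_eq]
  constructor
  · intro hab
    obtain ⟨c, hc⟩ := hG a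
    have hcb : c = b := eq_of_two e hc.ne' (Ne.symm hab)
    rw [← hcb]
    exact hc
  · exact fun h => h.ne

theorem stmt_13 {V W : Type*} [Fintype V] [Fintype W]
    (G : SimpleGraph V) (H : SimpleGraph W)
    (hG : NoIsolated G) (hH : NoIsolated H) :
    trdn (dirProd G H) = 4 ↔
      (Nonempty (G ≃g (⊤ : SimpleGraph (Fin 2))) ∧
        Nonempty (H ≃g (⊤ : SimpleGraph (Fin 2)))) := by
  constructor
  · intro h
    -- the infimum is attained
    have hne : {w | ∃ f : (V × W) → ℕ, IsTRDF (dirProd G H) f ∧ ∑ v, f v = w}.Nonempty := by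
      by_contra h'
      rw [Set.not_nonempty_iff_eq_empty] at h'
      unfold trdn at h
      rw [h', Nat.sInf_empty] at h
      omega
    have hmem := Nat.sInf_mem hne
    unfold trdn at h
    rw [h] at hmem
    obtain ⟨f, ⟨hle, h0, hpos⟩, hsum⟩ := hmem
    clear h hne
    -- Claim A: no vertex has label 2
    have claimA : ∀ x : V × W, f x ≤ 1 := by
      intro x
      by_contra hx
      have hx2 : f x = 2 := by have := hle x; omega
      obtain ⟨u, hadj, hu⟩ := hpos x (by omega)
      have hgu : G.Adj x.1 u.1 := hadj.1
      have hhu : H.Adj x.2 u.2 := hadj.2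
      have hxu : x ≠ u := by
        intro hh
        exact G.loopless.irrefl x.1 (by rw [hh] at hgu ⊢; exact hgu)
      have hxp : x ≠ (x.1, u.2) := by
        intro hh
        have h2 : x.2 = u.2 := by rw [hh]
        exact H.loopless.irrefl u.2 (h2 ▸ hhu)
      have hxq : x ≠ (u.1, x.2) := by
        intro hh
        have h2 : x.1 = u.1 := by rw [hh]
        exact G.loopless.irrefl u.1 (h2 ▸ hgu)
      have hup : u ≠ (x.1, u.2) := by
        intro hh
        have h2 : u.1 = x.1 := by rw [hh]
        exact G.loopless.irrefl u.1 (by rw [← h2] at hgu; exact hgu)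
      have huq : u ≠ (u.1, x.2) := by
        intro hh
        have h2 : u.2 = x.2 := by rw [hh]
        exact H.loopless.irrefl u.2 (by rw [← h2] at hhu; exact hhu)
      have hpq : ((x.1, u.2) : V × W) ≠ (u.1, x.2) := by
        intro hh
        simp only [Prod.mk.injEq] at hh
        exact G.loopless.irrefl u.1 (hh.1 ▸ hgu)
      rcases Nat.eq_zero_or_pos (f (x.1, u.2)) with hfp | hfp
      · -- the vertex (x.1, u.2) is 0-labeled: its 2-neighbor forces weight ≥ 5
        obtain ⟨z, hzadj, hz2⟩ := h0 (x.1, u.2) hfp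
        have hzg : G.Adj x.1 z.1 := hzadj.1
        have hzh : H.Adj u.2 z.2 := hzadj.2
        have hxz : x ≠ z := by
          intro hh
          exact G.loopless.irrefl x.1 (by rw [hh] at hzg ⊢; exact hzg)
        have huz : u ≠ z := by
          intro hh
          exact H.loopless.irrefl u.2 (by rw [hh] at hzh ⊢; exact hzh)
        have := sum_three_le f hxu hxz huz
        rw [hsum] at this
        omega
      · rcases Nat.eq_zero_or_pos (f (u.1, x.2)) with hfq | hfq
        · obtain ⟨z, hzadj, hz2⟩ := h0 (u.1, x.2) hfq
          have hzg : G.Adj u.1 z.1 := hzadj.1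
          have hzh : H.Adj x.2 z.2 := hzadj.2
          have hxz : x ≠ z := by
            intro hh
            exact H.loopless.irrefl x.2 (by rw [hh] at hzh ⊢; exact hzh)
          have huz : u ≠ z := by
            intro hh
            exact G.loopless.irrefl u.1 (by rw [hh] at hzg ⊢; exact hzg)
          have := sum_three_le f hxu hxz huz
          rw [hsum] at this
          omega
        · have := sum_four_le f hxu hxp hxq hup huq hpq
          rw [hsum] at this
          omega
    -- Claim B: every vertex has label 1
    have claimB : ∀ x : V × W, f x = 1 := by
      intro x
      rcases Nat.eq_zero_or_pos (f x) with hx | hx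
      · obtain ⟨u, _, hu2⟩ := h0 x hx
        have := claimA u
        omega
      · have := claimA x
        omega
    have hcard : Fintype.card (V × W) = 4 := by
      have : ∑ v : V × W, f v = Fintype.card (V × W) := by
        rw [Finset.sum_congr rfl (fun v _ => claimB v)]
        simp
      omega
    rw [Fintype.card_prod] at hcard
    -- both factor cards are 2
    have hVpos : 0 < Fintype.card V := by
      rcases Nat.eq_zero_or_pos (Fintype.card V) with h' | h'
      · rw [h'] at hcard; simp at hcard
      · exact h'
    have hWpos : 0 < Fintype.card W := by
      rcases Nat.eq_zero_or_pos (Fintype.card W) with h' | h'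
      · rw [h'] at hcard; simp at hcard
      · exact h'
    have hV1 : 1 < Fintype.card V := by
      obtain ⟨a⟩ := Fintype.card_pos_iff.mp hVpos
      obtain ⟨b, hb⟩ := hG a
      exact Fintype.one_lt_card_iff.mpr ⟨a, b, (G.ne_of_adj hb)⟩
    have hW1 : 1 < Fintype.card W := by
      obtain ⟨a⟩ := Fintype.card_pos_iff.mp hWpos
      obtain ⟨b, hb⟩ := hH a
      exact Fintype.one_lt_card_iff.mpr ⟨a, b, (H.ne_of_adj hb)⟩
    have hVle : Fintype.card V * 2 ≤ 4 := by
      calc Fintype.card V * 2 ≤ Fintype.card V * Fintype.card W :=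
            Nat.mul_le_mul_left _ hW1
        _ = 4 := hcard
    have hWle : 2 * Fintype.card W ≤ 4 := by
      calc 2 * Fintype.card W ≤ Fintype.card V * Fintype.card W :=
            Nat.mul_le_mul_right _ hV1
        _ = 4 := hcard
    have hV2 : Fintype.card V = 2 := by omega
    have hW2 : Fintype.card W = 2 := by omega
    exact ⟨iso_of_card_two G hG hV2, iso_of_card_two H hH hW2⟩
  · rintro ⟨⟨eG⟩, ⟨eH⟩⟩
    have hV2 : Fintype.card V = 2 := by
      rw [Fintype.card_congr eG.toEquiv, Fintype.card_fin]
    have hW2 : Fintype.card W = 2 := by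
      rw [Fintype.card_congr eH.toEquiv, Fintype.card_fin]
    have hmem : (4 : ℕ) ∈ {w | ∃ f : (V × W) → ℕ, IsTRDF (dirProd G H) f ∧ ∑ v, f v = w} := by
      refine ⟨fun _ => 1, ⟨fun v => by norm_num, fun v hv => by simp at hv, fun v _ => ?_⟩, ?_⟩
      · obtain ⟨g', hg'⟩ := hG v.1
        obtain ⟨h', hh'⟩ := hH v.2
        exact ⟨(g', h'), ⟨hg', hh'⟩, one_pos⟩
      · simp [Finset.card_univ, Fintype.card_prod, hV2, hW2]
    have hlow : ∀ n ∈ {w | ∃ f : (V × W) → ℕ, IsTRDF (dirProd G H) f ∧ ∑ v, f v = w},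
        4 ≤ n := by
      rintro n ⟨f, ⟨hle, h0, hpos⟩, hsum⟩
      have hall : ∀ v : V × W, 1 ≤ f v := by
        intro v
        by_contra hv
        have hv0 : f v = 0 := by omega
        obtain ⟨u, hu, hu2⟩ := h0 v hv0
        obtain ⟨z, hz, hzpos⟩ := hpos u (by omega)
        have h1 : z.1 = v.1 := eq_of_two eG.toEquiv (G.ne_of_adj hz.1).symm
          (G.ne_of_adj hu.1)
        have h2 : z.2 = v.2 := eq_of_two eH.toEquiv (H.ne_of_adj hz.2).symm
          (H.ne_of_adj hu.2)
        have : z = v := Prod.ext h1 h2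
        rw [this, hv0] at hzpos
        omega
      have : (Finset.univ : Finset (V × W)).card ≤ ∑ v : V × W, f v := by
        calc (Finset.univ : Finset (V × W)).card = ∑ _v : V × W, 1 := by simp
          _ ≤ ∑ v : V × W, f v := Finset.sum_le_sum (fun v _ => hall v)
      rw [hsum] at this
      simp [Finset.card_univ, Fintype.card_prod, hV2, hW2] at this
      omega
    exact le_antisymm (Nat.sInf_le hmem) (le_csInf ⟨4, hmem⟩ hlow)
end

section
/- If G is a graph with exactly one universal vertex, H is a graph with a universal vertex that is not isomorphic to K_2, and not both G and H are triangle centered, then γ_tR(G × H) ≤ 7. -/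
open Finset

/-- A graph is triangle centered if it has a triangle such that every vertex is
adjacent to at least two of its vertices. -/
def TriangleCentered {V : Type*} (G : SimpleGraph V) : Prop :=
  ∃ x y z : V, G.Adj x y ∧ G.Adj y z ∧ G.Adj x z ∧
    ∀ v : V, (G.Adj v x ∧ G.Adj v y) ∨ (G.Adj v y ∧ G.Adj v z) ∨ (G.Adj v x ∧ G.Adj v z)

/-- A universal vertex is adjacent to all other vertices. -/
def IsUniversalVertex {V : Type*} (G : SimpleGraph V) (v : V) : Prop :=
  ∀ u, u ≠ v → G.Adj v u

theorem stmt_16 {V W : Type*} [Fintype V] [Fintype W]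
    (G : SimpleGraph V) (H : SimpleGraph W)
    (hG : NoIsolated G) (hH : NoIsolated H)
    (hGuniv : ∃! v, IsUniversalVertex G v)
    (hHuniv : ∃ w, IsUniversalVertex H w)
    (hHK2 : ¬ Nonempty (H ≃g (⊤ : SimpleGraph (Fin 2))))
    (htc : ¬ (TriangleCentered G ∧ TriangleCentered H)) :
    trdn (dirProd G H) ≤ 7 := by
  classical
  obtain ⟨g, hg, -⟩ := hGuniv
  obtain ⟨h, hh⟩ := hHuniv
  obtain ⟨g', hgg'⟩ := hG g
  obtain ⟨a, hha⟩ := hH h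
  have hgne : g ≠ g' := hgg'.ne
  have hhne : h ≠ a := hha.ne
  set A : V × W := (g, h) with hA
  set B : V × W := (g, a) with hB
  set C : V × W := (g', h) with hC
  set D : V × W := (g', a) with hD
  set f : V × W → ℕ := fun p =>
    (if p = A then 2 else 0) + (if p = B then 2 else 0) +
    (if p = C then 2 else 0) + (if p = D then 1 else 0) with hf
  have hAB : A ≠ B := by simp [hA, hB, hhne]
  have hAC : A ≠ C := by simp [hA, hC, hgne]
  have hAD : A ≠ D := by simp [hA, hD, hgne]
  have hBC : B ≠ C := by simp [hB, hC, hgne]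
  have hBD : B ≠ D := by simp [hB, hD, hgne]
  have hCD : C ≠ D := by simp [hC, hD, hhne]
  have hfA : f A = 2 := by simp [hf, hAB, hAC, hAD]
  have hfB : f B = 2 := by simp [hf, hAB.symm, hBC, hBD]
  have hfC : f C = 2 := by simp [hf, hAC.symm, hBC.symm, hCD]
  have hfD : f D = 1 := by simp [hf, hAD.symm, hBD.symm, hCD.symm]
  have hTRDF : IsTRDF (dirProd G H) f := by
    refine ⟨?_, ?_, ?_⟩
    · intro p
      rcases eq_or_ne p A with rfl | hpA
      · omega
      rcases eq_or_ne p B with rfl | hpB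
      · omega
      rcases eq_or_ne p C with rfl | hpC
      · omega
      rcases eq_or_ne p D with rfl | hpD
      · omega
      simp [hf, hpA, hpB, hpC, hpD]
    · rintro ⟨v, w⟩ hp0
      have hpA : (v, w) ≠ A := by intro he; rw [he, hfA] at hp0; omega
      have hpB : (v, w) ≠ B := by intro he; rw [he, hfB] at hp0; omega
      have hpC : (v, w) ≠ C := by intro he; rw [he, hfC] at hp0; omega
      have hpD : (v, w) ≠ D := by intro he; rw [he, hfD] at hp0; omega
      rcases eq_or_ne w h with rfl | hwh
      · -- w = h, so v ≠ g and v ≠ g'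
        have hvg : v ≠ g := by intro hvg; exact hpA (by simp [hA, hvg])
        refine ⟨B, ⟨?_, ?_⟩, hfB⟩
        · exact (hg v hvg).symm
        · exact hha
      · rcases eq_or_ne v g with rfl | hvg
        · refine ⟨C, ⟨hgg', ?_⟩, hfC⟩
          exact (hh w hwh).symm
        · refine ⟨A, ⟨(hg v hvg).symm, (hh w hwh).symm⟩, hfA⟩
    · intro p hp
      have hmem : p = A ∨ p = B ∨ p = C ∨ p = D := by
        by_contra hcon
        push_neg at hcon
        obtain ⟨h1, h2, h3, h4⟩ := hcon
        simp [hf, h1, h2, h3, h4] at hp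
      rcases hmem with rfl | rfl | rfl | rfl
      · exact ⟨D, ⟨hgg', hha⟩, by omega⟩
      · exact ⟨C, ⟨hgg', hha.symm⟩, by omega⟩
      · exact ⟨B, ⟨hgg'.symm, hha⟩, by omega⟩
      · exact ⟨A, ⟨hgg'.symm, hha.symm⟩, by omega⟩
  have hsum : ∑ p, f p = 7 := by
    simp only [hf]
    rw [Finset.sum_add_distrib, Finset.sum_add_distrib, Finset.sum_add_distrib]
    rw [Finset.sum_ite_eq' Finset.univ A (fun _ => 2),
        Finset.sum_ite_eq' Finset.univ B (fun _ => 2),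
        Finset.sum_ite_eq' Finset.univ C (fun _ => 2),
        Finset.sum_ite_eq' Finset.univ D (fun _ => 1)]
    simp
  exact Nat.sInf_le ⟨f, hTRDF, hsum⟩
end

section
/- For complete graphs K_r and K_s with r > 2 and s ≥ 2 (and at least one of r, s at least 3), γ_tR(K_r × K_s) = 6. -/
open Finset

lemma fin_two_ne {r : ℕ} (hr : 2 < r) (x : Fin r) :
    ∃ y z : Fin r, y ≠ z ∧ y ≠ x ∧ z ≠ x := by
  refine ⟨if x.val = 0 then ⟨1, by omega⟩ else ⟨0, by omega⟩,
    if x.val = 2 then ⟨1, by omega⟩ else ⟨2, by omega⟩, ?_, ?_, ?_⟩ <;>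
    simp only [Fin.ne_iff_vne] <;> split_ifs <;> simp <;> omega

lemma fin_one_ne {s : ℕ} (hs : 2 ≤ s) (x : Fin s) : ∃ y : Fin s, y ≠ x := by
  refine ⟨if x.val = 0 then ⟨1, by omega⟩ else ⟨0, by omega⟩, ?_⟩
  simp only [Fin.ne_iff_vne]; split_ifs <;> simp <;> omega


lemma pfst {α β : Type*} {p q : α × β} (h : p = q) : p.1 = q.1 := congrArg Prod.fst h
lemma psnd {α β : Type*} {p q : α × β} (h : p = q) : p.2 = q.2 := congrArg Prod.snd h
lemma pfst' {α β : Type*} {x : α} {y : β} {q : α × β} (h : (x, y) = q) : x = q.1 :=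
  congrArg Prod.fst h
lemma psnd' {α β : Type*} {x : α} {y : β} {q : α × β} (h : (x, y) = q) : y = q.2 :=
  congrArg Prod.snd h
lemma pfst2 {α β : Type*} {x x' : α} {y y' : β} (h : (x, y) = (x', y')) : x = x' :=
  congrArg Prod.fst h

lemma trdf_lower (r s : ℕ) (hr : 2 < r) (hs : 2 ≤ s)
    (G : SimpleGraph (Fin r × Fin s))
    (hadj : ∀ p q : Fin r × Fin s, G.Adj p q ↔ p.1 ≠ q.1 ∧ p.2 ≠ q.2)
    (f : (Fin r × Fin s) → ℕ) (hf : IsTRDF G f) : 6 ≤ ∑ v, f v := by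
  obtain ⟨hf1, hf2, hf3⟩ := hf
  by_contra hcon
  push_neg at hcon
  have hsum : ∑ v, f v ≤ 5 := by omega
  obtain ⟨P, hP⟩ : ∃ P : Finset (Fin r × Fin s), P = univ.filter (fun v => 0 < f v) := ⟨_, rfl⟩
  obtain ⟨Q, hQ⟩ : ∃ Q : Finset (Fin r × Fin s), Q = univ.filter (fun v => f v = 2) := ⟨_, rfl⟩
  have hPmem : ∀ v, v ∈ P ↔ 0 < f v := by intro v; simp [hP]
  have hQmem : ∀ v, v ∈ Q ↔ f v = 2 := by intro v; simp [hQ]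
  have key : Q.card + P.card ≤ ∑ v, f v := by
    rw [hP, hQ, Finset.card_filter, Finset.card_filter, ← Finset.sum_add_distrib]
    refine Finset.sum_le_sum fun v _ => ?_
    have := hf1 v; split_ifs <;> omega
  have hQP : Q ⊆ P := by
    intro v hv; rw [hQmem] at hv; rw [hPmem]; omega
  rcases Q.eq_empty_or_nonempty with hQe | ⟨a, haQ⟩
  · have hall : ∀ v, 0 < f v := by
      intro v
      by_contra h
      obtain ⟨c, _, hc2⟩ := hf2 v (by omega)
      have : c ∈ Q := (hQmem c).2 hc2
      simp [hQe] at this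
    have hPu : P = univ := Finset.eq_univ_of_forall fun v => (hPmem v).2 (hall v)
    have h6 : 6 ≤ P.card := by
      rw [hPu, Finset.card_univ, Fintype.card_prod, Fintype.card_fin, Fintype.card_fin]
      calc 6 = 3 * 2 := rfl
        _ ≤ r * s := Nat.mul_le_mul (by omega) hs
    omega
  · have hfa : f a = 2 := (hQmem a).1 haQ
    by_cases hone : ∀ b ∈ Q, b = a
    · -- exactly one 2-vertex
      obtain ⟨u, hua, hup⟩ := hf3 a (by omega)
      rw [hadj] at hua
      obtain ⟨y, z, hyz, hya, hza⟩ := fin_two_ne hr a.1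
      obtain ⟨w, hwa⟩ := fin_one_ne hs a.2
      have hrowcol : ∀ v : Fin r × Fin s, v.1 = a.1 ∨ v.2 = a.2 → 0 < f v := by
        intro v hv
        by_contra h
        obtain ⟨c, hcadj, hc2⟩ := hf2 v (by omega)
        have hca : c = a := hone c ((hQmem c).2 hc2)
        rw [hadj, hca] at hcadj
        tauto
      have e1 : a ≠ (a.1, w) := fun h => hwa (psnd h).symm
      have e2 : a ≠ (y, a.2) := fun h => hya (pfst h).symm
      have e3 : a ≠ (z, a.2) := fun h => hza (pfst h).symm
      have e4 : a ≠ u := fun h => hua.1 (pfst h)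
      have e5 : (a.1, w) ≠ (y, a.2) := fun h => hya (pfst h).symm
      have e6 : (a.1, w) ≠ (z, a.2) := fun h => hza (pfst h).symm
      have e7 : ((a.1, w) : Fin r × Fin s) ≠ u := fun h => hua.1 (pfst' h)
      have e8 : ((y, a.2) : Fin r × Fin s) ≠ (z, a.2) := fun h => hyz (pfst h)
      have e9 : ((y, a.2) : Fin r × Fin s) ≠ u := fun h => hua.2 (psnd' h)
      have e10 : ((z, a.2) : Fin r × Fin s) ≠ u := fun h => hua.2 (psnd' h)
      have hTP : ({a, (a.1, w), (y, a.2), (z, a.2), u} : Finset (Fin r × Fin s)) ⊆ P := by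
        intro v hv
        simp only [mem_insert, mem_singleton] at hv
        rw [hPmem]
        rcases hv with h | h | h | h | h <;> subst h
        · omega
        · exact hrowcol _ (Or.inl rfl)
        · exact hrowcol _ (Or.inr rfl)
        · exact hrowcol _ (Or.inr rfl)
        · exact hup
      have hT5 : ({a, (a.1, w), (y, a.2), (z, a.2), u} : Finset (Fin r × Fin s)).card = 5 := by
        rw [card_insert_of_notMem (by simp [e1, e2, e3, e4]),
          card_insert_of_notMem (by simp [e5, e6, e7]),
          card_insert_of_notMem (by simp [e8, e9]),
          card_insert_of_notMem (by simp [e10]), card_singleton]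
      have h5 : 5 ≤ P.card := hT5 ▸ card_le_card hTP
      have h1 : 1 ≤ Q.card := card_pos.2 ⟨a, haQ⟩
      omega
    · push_neg at hone
      obtain ⟨b, hbQ, hba⟩ := hone
      have hfb : f b = 2 := (hQmem b).1 hbQ
      have hab : a ≠ b := hba.symm
      have hQ2 : 2 ≤ Q.card := Finset.one_lt_card.2 ⟨b, hbQ, a, haQ, hba⟩
      have hPc := card_le_card hQP
      have hP3 : P.card ≤ 3 := by omega
      have hQab : ∀ c ∈ Q, c = a ∨ c = b := by
        intro c hc
        by_contra h
        push_neg at h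
        have h3 : ({c, a, b} : Finset (Fin r × Fin s)) ⊆ Q := by
          intro v hv; simp only [mem_insert, mem_singleton] at hv
          rcases hv with h | h | h <;> subst h <;> assumption
        have hc3 : ({c, a, b} : Finset (Fin r × Fin s)).card = 3 := by
          rw [card_insert_of_notMem (by simp [h.1, h.2]),
            card_insert_of_notMem (by simp [hab]), card_singleton]
        have := hc3 ▸ card_le_card h3
        omega
      have huniq : ∀ u v : Fin r × Fin s, 0 < f u → 0 < f v →
          u ≠ a → u ≠ b → v ≠ a → v ≠ b → u = v := by
        intro u v hu hv hua hub hva hvb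
        by_contra h
        have h4 : ({u, v, a, b} : Finset (Fin r × Fin s)) ⊆ P := by
          intro x hx; simp only [mem_insert, mem_singleton] at hx
          rw [hPmem]
          rcases hx with h | h | h | h <;> subst h <;> omega
        have hc4 : ({u, v, a, b} : Finset (Fin r × Fin s)).card = 4 := by
          rw [card_insert_of_notMem (by simp [h, hua, hub]),
            card_insert_of_notMem (by simp [hva, hvb]),
            card_insert_of_notMem (by simp [hab]), card_singleton]
        have := hc4 ▸ card_le_card h4
        omega
      have hdom : ∀ v : Fin r × Fin s, (v.1 = a.1 ∨ v.2 = a.2) →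
          (v.1 = b.1 ∨ v.2 = b.2) → 0 < f v := by
        intro v h1 h2
        by_contra h
        obtain ⟨c, hcadj, hc2⟩ := hf2 v (by omega)
        rcases hQab c ((hQmem c).2 hc2) with hc | hc <;> rw [hadj, hc] at hcadj <;> tauto
      rcases eq_or_ne a.1 b.1 with h1 | h1
      · have h2 : a.2 ≠ b.2 := fun h => hba (Prod.ext h1.symm h.symm)
        obtain ⟨u, hua, hup⟩ := hf3 a (by omega)
        rw [hadj] at hua
        obtain ⟨v, hvb, hvp⟩ := hf3 b (by omega)
        rw [hadj] at hvb
        have huv : u = v := by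
          refine huniq u v hup hvp ?_ ?_ ?_ ?_ <;> intro h <;> subst h
          · exact hua.1 rfl
          · exact hua.1 h1
          · exact hvb.1 h1.symm
          · exact hvb.1 rfl
        subst huv
        have hzp : 0 < f (a.1, u.2) := hdom _ (Or.inl rfl) (Or.inl h1)
        have hz : (a.1, u.2) = u := by
          refine huniq _ u hzp hup ?_ ?_ ?_ ?_
          · exact fun h => hua.2 (psnd h).symm
          · exact fun h => hvb.2 (psnd h).symm
          · intro h; subst h; exact hua.1 rfl
          · intro h; subst h; exact hua.1 h1
        exact hua.1 (pfst' hz)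
      · rcases eq_or_ne a.2 b.2 with h2 | h2
        · obtain ⟨u, hua, hup⟩ := hf3 a (by omega)
          rw [hadj] at hua
          obtain ⟨v, hvb, hvp⟩ := hf3 b (by omega)
          rw [hadj] at hvb
          have huv : u = v := by
            refine huniq u v hup hvp ?_ ?_ ?_ ?_ <;> intro h <;> subst h
            · exact hua.1 rfl
            · exact hua.2 h2
            · exact hvb.2 h2.symm
            · exact hvb.1 rfl
          subst huv
          have hzp : 0 < f (u.1, a.2) := hdom _ (Or.inr rfl) (Or.inr h2)
          have hz : (u.1, a.2) = u := by
            refine huniq _ u hzp hup ?_ ?_ ?_ ?_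
            · exact fun h => hua.1 (pfst h).symm
            · exact fun h => hvb.1 (pfst h).symm
            · intro h; subst h; exact hua.1 rfl
            · intro h; subst h; exact hua.2 h2
          exact hua.2 (psnd' hz)
        · have hxp : 0 < f (a.1, b.2) := hdom _ (Or.inl rfl) (Or.inr rfl)
          have hyp : 0 < f (b.1, a.2) := hdom _ (Or.inr rfl) (Or.inl rfl)
          have hxy : (a.1, b.2) = ((b.1, a.2) : Fin r × Fin s) := by
            refine huniq _ _ hxp hyp ?_ ?_ ?_ ?_
            · exact fun h => h2 (psnd h).symm
            · exact fun h => h1 (pfst' h)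
            · exact fun h => h1 (pfst h).symm
            · exact fun h => h2 (psnd' h)
          exact h1 (pfst2 hxy)

lemma trdf_upper (r s : ℕ) (hr : 2 < r) (hs : 2 ≤ s)
    (G : SimpleGraph (Fin r × Fin s))
    (hadj : ∀ p q : Fin r × Fin s, G.Adj p q ↔ p.1 ≠ q.1 ∧ p.2 ≠ q.2) :
    (6 : ℕ) ∈ {w | ∃ f : (Fin r × Fin s) → ℕ, IsTRDF G f ∧ ∑ v, f v = w} := by
  set i0 : Fin r := ⟨0, by omega⟩ with hi0
  set i1 : Fin r := ⟨1, by omega⟩ with hi1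
  set j0 : Fin s := ⟨0, by omega⟩ with hj0
  set j1 : Fin s := ⟨1, by omega⟩ with hj1
  have hii : i0 ≠ i1 := by simp [hi0, hi1, Fin.ext_iff]
  have hjj : j0 ≠ j1 := by simp [hj0, hj1, Fin.ext_iff]
  set f : (Fin r × Fin s) → ℕ := fun v =>
    if v = (i0, j0) ∨ v = (i1, j1) then 2
    else if v = (i0, j1) ∨ v = (i1, j0) then 1 else 0 with hf
  have hf00 : f (i0, j0) = 2 := by simp [hf]
  have hf11 : f (i1, j1) = 2 := by simp [hf]
  have hf01 : f (i0, j1) = 1 := by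
    simp only [hf]; rw [if_neg, if_pos] <;> simp [Prod.ext_iff, hjj, hii, hjj.symm, hii.symm]
  have hf10 : f (i1, j0) = 1 := by
    simp only [hf]; rw [if_neg, if_pos] <;> simp [Prod.ext_iff, hjj, hii, hjj.symm, hii.symm]
  refine ⟨f, ⟨?_, ?_, ?_⟩, ?_⟩
  · intro v; simp only [hf]; split_ifs <;> omega
  · intro v hv
    simp only [hf] at hv
    split_ifs at hv with h1 h2
    simp only [not_or, Prod.ext_iff, not_and] at h1 h2
    have hv1 : ¬(v.1 = i0 ∧ v.1 = i1) := fun ⟨a, b⟩ => hii (a ▸ b ▸ rfl)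
    have hv2 : ¬(v.2 = j0 ∧ v.2 = j1) := fun ⟨a, b⟩ => hjj (a ▸ b ▸ rfl)
    by_cases hc : v.1 ≠ i0 ∧ v.2 ≠ j0
    · exact ⟨(i0, j0), (hadj _ _).2 hc, hf00⟩
    · refine ⟨(i1, j1), (hadj _ _).2 ⟨?_, ?_⟩, hf11⟩ <;> · simp at hc ⊢; tauto
  · intro v hv
    simp only [hf] at hv
    split_ifs at hv with h1 h2
    · rcases h1 with h | h
      · exact ⟨(i1, j1), (hadj _ _).2 (by simp [h, hii, hjj]), by simp [hf11]⟩
      · exact ⟨(i0, j0), (hadj _ _).2 (by simp [h, hii.symm, hjj.symm]), by simp [hf00]⟩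
    · rcases h2 with h | h
      · exact ⟨(i1, j0), (hadj _ _).2 (by simp [h, hii, hjj.symm]), by simp [hf10]⟩
      · exact ⟨(i0, j1), (hadj _ _).2 (by simp [h, hii.symm, hjj]), by simp [hf01]⟩
    · omega
  · have hsub : ({(i0, j0), (i1, j1), (i0, j1), (i1, j0)} : Finset (Fin r × Fin s)) ⊆ univ :=
      subset_univ _
    rw [show (6 : ℕ) = ∑ v ∈ ({(i0, j0), (i1, j1), (i0, j1), (i1, j0)} : Finset (Fin r × Fin s)), f v by
      rw [Finset.sum_insert, Finset.sum_insert, Finset.sum_insert, Finset.sum_singleton] <;>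
        simp [Prod.ext_iff, hii, hjj, hii.symm, hjj.symm, hf00, hf11, hf01, hf10]]
    refine (Finset.sum_subset hsub ?_).symm
    intro x _ hx
    simp only [Finset.mem_insert, Finset.mem_singleton, not_or] at hx
    simp only [hf]
    rw [if_neg (by tauto), if_neg (by tauto)]

theorem stmt_17 (r s : ℕ) (hr : 2 < r) (hs : 2 ≤ s) :
    trdn (dirProd (⊤ : SimpleGraph (Fin r)) (⊤ : SimpleGraph (Fin s))) = 6 := by
  set G := dirProd (⊤ : SimpleGraph (Fin r)) (⊤ : SimpleGraph (Fin s)) with hG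
  have hadj : ∀ p q : Fin r × Fin s, G.Adj p q ↔ p.1 ≠ q.1 ∧ p.2 ≠ q.2 := by
    intro p q; simp [hG, dirProd]
  have hmem : (6 : ℕ) ∈ {w | ∃ f : (Fin r × Fin s) → ℕ, IsTRDF G f ∧ ∑ v, f v = w} :=
    trdf_upper r s hr hs G hadj
  have hlb : ∀ w ∈ {w | ∃ f : (Fin r × Fin s) → ℕ, IsTRDF G f ∧ ∑ v, f v = w}, 6 ≤ w := by
    rintro w ⟨f, hf, rfl⟩
    exact trdf_lower r s hr hs G hadj f hf
  refine le_antisymm (Nat.sInf_le hmem) (hlb _ (Nat.sInf_mem ⟨6, hmem⟩))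
end
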